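/- Fix integers k ≥ 1 and c ≥ 1 and set α_pat(k) = 100·2^{ck} and α_long(k) = 10^4·2^{ck}. Let H be a graph, Z a set of vertices of H, R a Steiner tree for Z in H, and P a long maximal degree-2 path of R with endpoints u and v. Let S_u ⊆ V(H) \ (A_{R,P,u} ∪ B_{R,P,u}) be a set that separates A_{R,P,u} from B_{R,P,u} in H, and let S_v ⊆ V(H) \ (A_{R,P,v} ∪ B_{R,P,v}) be a set that separates A_{R,P,v} from B_{R,P,v} in H. Then there exist vertices u' ∈ S_u ∩ V(P) and v' ∈ S_v ∩ V(P) such that: (1) the subpath P_{u,u'} of P with endpoints u and u' has no internal vertex from S_u ∪ S_v, and α_pat(k)/2 ≤ |V(P_{u,u'})| ≤ α_pat(k); (2) the subpath P_{v,v'} of P with endpoints v and v' has no internal vertex from S_u ∪ S_v, and α_pat(k)/2 ≤ |V(P_{v,v'})| ≤ α_pat(k); and (3) letting P_{u',v'} be the subpath of P with endpoints u' and v', P is the concatenation P_{u,u'} − P_{u',v'} − P_{v',v}, with V(P_{u,u'}) ∩ V(P_{u',v'}) = {u'}, V(P_{v,v'}) ∩ V(P_{u',v'}) = {v'}, and V(P_{u,u'})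 ∩ V(P_{v,v'}) = ∅. -/

import Mathlib

open SimpleGraph

/-- The degree of a vertex in a subgraph: the number of its neighbours in the subgraph. -/
noncomputable def degN {V : Type*} {H : SimpleGraph V} (R : H.Subgraph) (v : V) : ℕ :=
  (R.neighborSet v).ncard

/-- `R` is a Steiner tree for `Z` in `H`: a subtree of `H` whose set of leaves
(vertices of degree exactly `1`) is exactly `Z`. -/
def IsSteinerTree {V : Type*} (H : SimpleGraph V) (Z : Set V) (R : H.Subgraph) : Prop :=
  R.coe.IsTree ∧ {v : V | degN R v = 1} = Z

/-- For a walk `Q` (a long maximal degree-2 path of `R`, oriented away from its endpoint `u`)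
and `n` (= `α_pat(k)`), this is the set `A_{R,Q,u}`: the union of the set of the `n / 2`
vertices of `Q` closest to `u` (the vertex set of `P''_u`) with the vertex set of the
connected component of `R − (V(P'_u) \ {u})` containing `u`, where `P'_u` consists of the
`n` vertices of `Q` closest to `u`. -/
def sideA {V : Type*} (H : SimpleGraph V) (R : H.Subgraph) {u v : V}
    (Q : H.Walk u v) (n : ℕ) : Set V :=
  {w : V | w ∈ Q.support.take (n / 2)} ∪
  {w : V | ∃ (hw : w ∈ (R.deleteVerts ({x : V | x ∈ Q.support.take n} \ {u})).verts)
      (hu : u ∈ (R.deleteVerts ({x : V | x ∈ Q.support.take n} \ {u})).verts),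
      (R.deleteVerts ({x : V | x ∈ Q.support.take n} \ {u})).coe.Reachable ⟨w, hw⟩ ⟨u, hu⟩}

/-- The set `B_{R,Q,u} = V(R) \ (A_{R,Q,u} ∪ V(P'_u))`. -/
def sideB {V : Type*} (H : SimpleGraph V) (R : H.Subgraph) {u v : V}
    (Q : H.Walk u v) (n : ℕ) : Set V :=
  R.verts \ (sideA H R Q n ∪ {w : V | w ∈ Q.support.take n})

/-- `S` separates `A` from `B` in `H`: every walk of `H` from `A` to `B` meets `S`
(equivalently, `H − S` has no path with one endpoint in `A` and one endpoint in `B`). -/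
def Separates {V : Type*} (H : SimpleGraph V) (A B S : Set V) : Prop :=
  ∀ (x y : V) (W : H.Walk x y), x ∈ A → y ∈ B → ∃ w ∈ W.support, w ∈ S

namespace ThreePartsAux

open SimpleGraph

lemma mem_take_iff {α : Type*} [DecidableEq α] {a : α} {l : List α} (ha : a ∈ l) {k : ℕ} :
    a ∈ l.take k ↔ l.idxOf a < k := by
  constructor
  · intro h
    have h0 := List.idxOf_append_of_mem (l₂ := l.drop k) h
    rw [List.take_append_drop] at h0
    calc l.idxOf a = (l.take k).idxOf a := h0
      _ < (l.take k).length := List.idxOf_lt_length_iff.mpr h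
      _ ≤ k := by rw [List.length_take]; exact min_le_left _ _
  · intro h
    have h1 : l.idxOf a < l.length := List.idxOf_lt_length_iff.mpr ha
    have h2 : l.idxOf a < (l.take k).length := by rw [List.length_take]; omega
    have h3 : (l.take k)[l.idxOf a]'h2 = a := by
      rw [List.getElem_take]; exact List.getElem_idxOf h1
    exact h3 ▸ List.getElem_mem h2

lemma mem_drop_iff {α : Type*} [DecidableEq α] {a : α} {l : List α} (hnd : l.Nodup)
    (ha : a ∈ l) {k : ℕ} :
    a ∈ l.drop k ↔ k ≤ l.idxOf a := by
  have h1 : a ∈ l.take k ∨ a ∈ l.drop k := by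
    rw [← List.mem_append, List.take_append_drop]; exact ha
  have hnd' : (l.take k ++ l.drop k).Nodup := by rw [List.take_append_drop]; exact hnd
  have hdisj := List.disjoint_of_nodup_append hnd'
  constructor
  · intro h
    by_contra hlt
    exact hdisj ((mem_take_iff ha).mpr (by omega)) h
  · intro h
    rcases h1 with h1 | h1
    · exact absurd ((mem_take_iff ha).mp h1) (by omega)
    · exact h1

lemma indexOf_drop {α : Type*} [DecidableEq α] {l : List α} (hnd : l.Nodup) {a : α} {k : ℕ}
    (ha : a ∈ l.drop k) :
    l.idxOf a = k + (l.drop k).idxOf a := by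
  have h1 : (l.drop k).idxOf a < (l.drop k).length := List.idxOf_lt_length_iff.mpr ha
  have h1' : k + (l.drop k).idxOf a < l.length := by
    rw [List.length_drop] at h1; omega
  have h2 : l[k + (l.drop k).idxOf a]'h1' = a := by
    rw [← List.getElem_drop]; exact List.getElem_idxOf h1
  conv_lhs => rw [← h2]
  exact List.Nodup.idxOf_getElem hnd _ _

variable {V : Type*} [DecidableEq V] {H : SimpleGraph V}

lemma takeUntil_support_eq {u v w : V} (p : H.Walk v w) (hp : p.support.Nodup)
    (h : u ∈ p.support) :
    (p.takeUntil u h).length = p.support.idxOf u ∧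
    (p.takeUntil u h).support = p.support.take (p.support.idxOf u + 1) := by
  set t := p.takeUntil u h with ht
  have key : t.support ++ (p.dropUntil u h).support.tail = p.support := by
    rw [← Walk.support_append, Walk.take_spec]
  have hpre : t.support <+: p.support := ⟨_, key⟩
  have heq : t.support = p.support.take (t.length + 1) := by
    have h5 := List.prefix_iff_eq_take.mp hpre
    rwa [Walk.length_support] at h5
  have hlen : t.length < p.support.length := by
    rw [Walk.length_support]; exact Nat.lt_succ_of_le (Walk.length_takeUntil_le p h)
  have hgetl : p.support[t.length]'hlen = u := by
    have h1 : t.support.getLast (Walk.support_ne_nil t) = u := Walk.getLast_support t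
    rw [List.getLast_eq_getElem, List.getElem_of_eq heq] at h1
    have h2 : t.support.length - 1 = t.length := by rw [Walk.length_support]; omega
    simp only [h2] at h1
    rwa [List.getElem_take] at h1
  have hidx : p.support.idxOf u = t.length := by
    have h9 := List.Nodup.idxOf_getElem hp t.length hlen
    rw [hgetl] at h9
    exact h9
  exact ⟨hidx.symm, by rw [hidx, ← heq]⟩

lemma dropUntil_support_eq {u v w : V} (p : H.Walk v w) (hp : p.support.Nodup)
    (h : u ∈ p.support) :
    (p.dropUntil u h).support = p.support.drop (p.support.idxOf u) := by
  obtain ⟨hl, hs⟩ := takeUntil_support_eq p hp h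
  have key : (p.takeUntil u h).support ++ (p.dropUntil u h).support.tail = p.support := by
    rw [← Walk.support_append, Walk.take_spec]
  have hidxlt : p.support.idxOf u < p.support.length := List.idxOf_lt_length_iff.mpr h
  have h1 : (p.dropUntil u h).support.tail = p.support.drop (p.support.idxOf u + 1) := by
    have h2 := congrArg (List.drop (p.support.idxOf u + 1)) key
    rwa [hs, List.drop_append_of_le_length (by rw [List.length_take]; omega),
      List.drop_take, Nat.sub_self, List.take_zero, List.nil_append] at h2
  rw [Walk.support_eq_cons, h1, List.drop_eq_getElem_cons hidxlt, List.getElem_idxOf]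

omit [DecidableEq V] in
lemma lift_walk {R : H.Subgraph} :
    ∀ {a b : V} (p : H.Walk a b), (∀ e ∈ p.edges, e ∈ R.edgeSet) →
      ∀ (ha : a ∈ R.verts) (hb : b ∈ R.verts),
      ∃ q : R.coe.Walk ⟨a, ha⟩ ⟨b, hb⟩, q.support.map Subtype.val = p.support := by
  intro a b p
  induction p with
  | nil => intro _ ha hb; exact ⟨Walk.nil, by simp⟩
  | @cons x y z hadj p ih =>
      intro he ha hb
      have hxy : R.Adj x y := Subgraph.mem_edgeSet.mp (he _ (by simp))
      have hy : y ∈ R.verts := hxy.snd_mem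
      obtain ⟨q, hq⟩ := ih (fun e hep => he e (by simp [hep])) hy hb
      refine ⟨Walk.cons ((Subgraph.coe_adj R ⟨x, ha⟩ ⟨y, hy⟩) ▸ hxy) q, ?_⟩
      simp [hq]

lemma not_reachable (R : H.Subgraph) (hAc : R.coe.IsAcyclic)
    {a b : V} (p : H.Walk a b) (hp : p.IsPath)
    (he : ∀ e ∈ p.edges, e ∈ R.edgeSet)
    (D : Set V) (x : V) (hx : x ∈ p.support) (hxD : x ∈ D)
    (ha : a ∈ (R.deleteVerts D).verts) (hb : b ∈ (R.deleteVerts D).verts) :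
    ¬ (R.deleteVerts D).coe.Reachable ⟨a, ha⟩ ⟨b, hb⟩ := by
  intro hre
  have haR : a ∈ R.verts := ha.1
  have hbR : b ∈ R.verts := hb.1
  obtain ⟨W⟩ := hre
  let f : (R.deleteVerts D).coe →g R.coe := Subgraph.inclusion Subgraph.deleteVerts_le
  have hW : ∀ y ∈ (W.map f).support, (y : V) ∉ D := by
    intro y hy
    rw [Walk.support_map, List.mem_map] at hy
    obtain ⟨z, hz, rfl⟩ := hy
    exact z.property.2
  obtain ⟨q, hq⟩ := lift_walk p he haR hbR
  have hqnd : q.support.Nodup := by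
    have h0 := hp.support_nodup
    rw [← hq] at h0
    exact h0.of_map _
  have hqp : q.IsPath := (Walk.isPath_def q).mpr hqnd
  have huniq := hAc.path_unique ⟨q, hqp⟩ (W.map f).toPath
  have hx' : ∃ y ∈ q.support, (y : V) = x := by
    rw [← hq] at hx
    obtain ⟨y, hy, hyx⟩ := List.mem_map.mp hx
    exact ⟨y, hy, hyx⟩
  obtain ⟨y, hy, rfl⟩ := hx'
  have hq2 : q = ((W.map f).toPath : R.coe.Path _ _).val := congrArg Subtype.val huniq
  rw [hq2] at hy
  exact hW y (Walk.support_toPath_subset _ hy) hxD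

end ThreePartsAux

namespace ThreePartsAux

variable {V : Type*} [DecidableEq V] {H : SimpleGraph V}

lemma getElem_mem_sideB (R : H.Subgraph) (hAc : R.coe.IsAcyclic)
    {u v : V} (Q : H.Walk u v) (hQp : Q.IsPath) (hQR : Q.toSubgraph ≤ R)
    {n : ℕ} (hn : 2 ≤ n) {j : ℕ} (hj : n ≤ j) (hjl : j < Q.support.length) :
    Q.support[j] ∈ sideB H R Q n := by
  have hnd := hQp.support_nodup
  have hidx : Q.support.idxOf Q.support[j] = j := List.Nodup.idxOf_getElem hnd j hjl
  have hmem : Q.support[j] ∈ Q.support := List.getElem_mem hjl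
  have hverts : ∀ w ∈ Q.support, w ∈ R.verts := fun w hw =>
    hQR.1 ((Walk.mem_verts_toSubgraph Q).mpr hw)
  have hedges : ∀ e ∈ Q.edges, e ∈ R.edgeSet := fun e he =>
    Subgraph.edgeSet_mono hQR (by rw [Walk.edgeSet_toSubgraph]; exact he)
  refine ⟨hverts _ hmem, ?_⟩
  rintro (hA | hT)
  · rcases hA with hA | ⟨hw, hu', hre⟩
    · have h5 : Q.support[j] ∈ Q.support.take (n / 2) := hA
      have := (mem_take_iff hmem).mp h5
      omega
    · set p := Q.takeUntil Q.support[j] hmem with hpdef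
      have hppath : p.IsPath := hQp.takeUntil hmem
      obtain ⟨hlp, hsp⟩ := takeUntil_support_eq Q hnd hmem
      have hx1lt : 1 < Q.support.length := by omega
      have hx1 : Q.support[1] ∈ p.support := by
        rw [hsp, hidx]
        have h2 : (1:ℕ) < (Q.support.take (j+1)).length := by rw [List.length_take]; omega
        have h3 : (Q.support.take (j+1))[1]'h2 = Q.support[1] := List.getElem_take
        exact h3 ▸ List.getElem_mem h2
      have hu0 : Q.support.idxOf u = 0 := by
        rw [Walk.support_eq_cons, List.idxOf_cons_self]
      have hx1D : Q.support[1] ∈ ({x : V | x ∈ Q.support.take n} \ {u} : Set V) := by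
        constructor
        · show Q.support[1] ∈ Q.support.take n
          refine (mem_take_iff (List.getElem_mem hx1lt)).mpr ?_
          rw [List.Nodup.idxOf_getElem hnd 1 hx1lt]; omega
        · intro h0
          have h0' : Q.support[1] = u := h0
          have := List.Nodup.idxOf_getElem hnd 1 hx1lt
          rw [h0', hu0] at this
          omega
      exact not_reachable R hAc p hppath
        (fun e hep => hedges e (Walk.edges_takeUntil_subset _ _ hep))
        _ _ hx1 hx1D hu' hw hre.symm
  · have h5 : Q.support[j] ∈ Q.support.take n := hT
    have := (mem_take_iff hmem).mp h5
    omega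

lemma pos_bounds (R : H.Subgraph) (hAc : R.coe.IsAcyclic)
    {u v : V} (Q : H.Walk u v) (hQp : Q.IsPath) (hQR : Q.toSubgraph ≤ R)
    {n : ℕ} (hn : 2 ≤ n) (S : Set V)
    (hDisj : S ⊆ (sideA H R Q n ∪ sideB H R Q n)ᶜ) :
    ∀ i (hi : i < Q.support.length), Q.support[i] ∈ S → n / 2 ≤ i ∧ i < n := by
  intro i hi hS
  have hnd := hQp.support_nodup
  have hmem : Q.support[i] ∈ Q.support := List.getElem_mem hi
  constructor
  · by_contra hlt
    push_neg at hlt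
    refine hDisj hS (Or.inl (Or.inl ?_))
    show Q.support[i] ∈ Q.support.take (n / 2)
    exact (mem_take_iff hmem).mpr (by rw [List.Nodup.idxOf_getElem hnd i hi]; omega)
  · by_contra hge
    push_neg at hge
    exact hDisj hS (Or.inr (getElem_mem_sideB R hAc Q hQp hQR hn hge hi))

lemma exists_sep_vertex (R : H.Subgraph) (hAc : R.coe.IsAcyclic)
    {u v : V} (Q : H.Walk u v) (hQp : Q.IsPath) (hQR : Q.toSubgraph ≤ R)
    {n : ℕ} (hn : 2 ≤ n) (hlen : n < Q.support.length) (S : Set V)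
    (hSep : Separates H (sideA H R Q n) (sideB H R Q n) S) :
    ∃ i, ∃ hi : i < Q.support.length, Q.support[i] ∈ S := by
  have hnd := hQp.support_nodup
  have hmemn : Q.support[n] ∈ Q.support := List.getElem_mem hlen
  have huA : u ∈ sideA H R Q n := by
    left
    show u ∈ Q.support.take (n / 2)
    refine (mem_take_iff Q.start_mem_support).mpr ?_
    rw [Walk.support_eq_cons, List.idxOf_cons_self]
    omega
  have hnB : Q.support[n] ∈ sideB H R Q n :=
    getElem_mem_sideB R hAc Q hQp hQR hn le_rfl hlen
  obtain ⟨w, hwW, hwS⟩ := hSep u _ (Q.takeUntil _ hmemn) huA hnB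
  have hws : w ∈ Q.support := Walk.support_takeUntil_subset Q hmemn hwW
  exact ⟨_, List.idxOf_lt_length_iff.mpr hws, by rw [List.getElem_idxOf]; exact hwS⟩

end ThreePartsAux

/-- Lemma "threeParts": given a Steiner tree `R`, a long maximal degree-2 path `Q` of `R`
with endpoints `u, v`, and separators `Su` (for `A_{R,Q,u}`/`B_{R,Q,u}`) and `Sv` (for
`A_{R,Q,v}`/`B_{R,Q,v}`, defined via the reversed path), both disjoint from the sets they
separate, there exist `u' ∈ Su ∩ V(Q)` and `v' ∈ Sv ∩ V(Q)` such that: (1) the subpath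
`P_{u,u'}` of `Q` has no internal vertex of `Su ∪ Sv` and has between `α_pat(k)/2` and
`α_pat(k)` vertices; (2) likewise for the subpath `P_{v',v}`; and (3) `Q` decomposes as
`P_{u,u'} − P_{u',v'} − P_{v',v}`, with consecutive parts meeting exactly in `u'`
(resp. `v'`) and the two extreme parts disjoint. -/
theorem stmt9 {V : Type*} [Fintype V] [DecidableEq V] (H : SimpleGraph V) (Z : Set V)
    (k c : ℕ) (hk : 1 ≤ k) (hc : 1 ≤ c)
    (R : H.Subgraph) (hR : IsSteinerTree H Z R)
    {u v : V} (Q : H.Walk u v) (hQp : Q.IsPath) (hQR : Q.toSubgraph ≤ R) (huv : u ≠ v)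
    (hu : degN R u = 1 ∨ 3 ≤ degN R u) (hv : degN R v = 1 ∨ 3 ≤ degN R v)
    (hnear : ∀ w ∈ Q.support, w ≠ u → w ≠ v → degN R w < 3)
    (hlong : 10 ^ 4 * 2 ^ (c * k) ≤ Q.length)
    (Su Sv : Set V)
    (hSuDisj : Su ⊆ (sideA H R Q (100 * 2 ^ (c * k)) ∪ sideB H R Q (100 * 2 ^ (c * k)))ᶜ)
    (hSuSep : Separates H (sideA H R Q (100 * 2 ^ (c * k)))
      (sideB H R Q (100 * 2 ^ (c * k))) Su)
    (hSvDisj : Sv ⊆ (sideA H R Q.reverse (100 * 2 ^ (c * k))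
      ∪ sideB H R Q.reverse (100 * 2 ^ (c * k)))ᶜ)
    (hSvSep : Separates H (sideA H R Q.reverse (100 * 2 ^ (c * k)))
      (sideB H R Q.reverse (100 * 2 ^ (c * k))) Sv) :
    ∃ (u' v' : V) (h1 : u' ∈ Q.support) (h2 : v' ∈ (Q.dropUntil u' h1).support),
      u' ∈ Su ∧ v' ∈ Sv ∧
      (∀ w ∈ (Q.takeUntil u' h1).support, w ≠ u → w ≠ u' → w ∉ Su ∪ Sv) ∧
      50 * 2 ^ (c * k) ≤ (Q.takeUntil u' h1).length + 1 ∧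
      (Q.takeUntil u' h1).length + 1 ≤ 100 * 2 ^ (c * k) ∧
      (∀ w ∈ ((Q.dropUntil u' h1).dropUntil v' h2).support,
        w ≠ v' → w ≠ v → w ∉ Su ∪ Sv) ∧
      50 * 2 ^ (c * k) ≤ ((Q.dropUntil u' h1).dropUntil v' h2).length + 1 ∧
      ((Q.dropUntil u' h1).dropUntil v' h2).length + 1 ≤ 100 * 2 ^ (c * k) ∧
      Q = ((Q.takeUntil u' h1).append
            ((Q.dropUntil u' h1).takeUntil v' h2)).append
            ((Q.dropUntil u' h1).dropUntil v' h2) ∧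
      {w : V | w ∈ (Q.takeUntil u' h1).support} ∩
        {w : V | w ∈ ((Q.dropUntil u' h1).takeUntil v' h2).support} = {u'} ∧
      {w : V | w ∈ ((Q.dropUntil u' h1).dropUntil v' h2).support} ∩
        {w : V | w ∈ ((Q.dropUntil u' h1).takeUntil v' h2).support} = {v'} ∧
      {w : V | w ∈ (Q.takeUntil u' h1).support} ∩
        {w : V | w ∈ ((Q.dropUntil u' h1).dropUntil v' h2).support} = ∅ := by
  classical
  have hAc : R.coe.IsAcyclic := hR.1.IsAcyclic
  set x := 2 ^ (c * k) with hxdef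
  have hx1 : 1 ≤ x := Nat.one_le_two_pow
  set n := 100 * x with hndef
  have hn2 : 2 ≤ n := by omega
  set s := Q.support with hs
  have hnd : s.Nodup := hQp.support_nodup
  have hslen : s.length = Q.length + 1 := Walk.length_support Q
  have hQlen : Q.support.length = Q.length + 1 := Walk.length_support Q
  have h10 : (10:ℕ) ^ 4 = 10000 := by norm_num
  rw [h10] at hlong
  have hL : 100 * n ≤ Q.length := by omega
  have hgcongr : ∀ {i j : ℕ} (hi : i < s.length) (hj : j < s.length),
      i = j → s[i]'hi = s[j]'hj := by
    intro i j hi hj h; subst h; rfl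
  -- reverse facts
  have hrevp : Q.reverse.IsPath := hQp.reverse
  have hrevR : Q.reverse.toSubgraph ≤ R := by rw [Walk.toSubgraph_reverse]; exact hQR
  have hrevlen : Q.reverse.support.length = s.length := by
    rw [Walk.support_reverse, List.length_reverse, hs]
  have hrevget : ∀ j (hj : j < s.length),
      Q.reverse.support[j]'(by rw [hrevlen]; exact hj) = s[Q.length - j]'(by omega) := by
    intro j hj
    rw [List.getElem_of_eq (Walk.support_reverse Q), List.getElem_reverse]
    exact hgcongr _ _ (by omega)
  -- position bounds
  have hposu := ThreePartsAux.pos_bounds R hAc Q hQp hQR hn2 Su hSuDisj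
  have hposv := ThreePartsAux.pos_bounds R hAc Q.reverse hrevp hrevR hn2 Sv hSvDisj
  have hSvpos : ∀ i (hi : i < s.length), s[i] ∈ Sv →
      n / 2 ≤ Q.length - i ∧ Q.length - i < n := by
    intro i hi hmemSv
    refine hposv (Q.length - i) (by rw [hrevlen]; omega) ?_
    rw [hrevget (Q.length - i) (by omega)]
    have h7 : Q.length - (Q.length - i) = i := by omega
    simp only [h7]
    exact hmemSv
  -- existence of separator vertices on the path
  have hexSu : ∃ i, ∃ hi : i < s.length, s[i] ∈ Su :=
    ThreePartsAux.exists_sep_vertex R hAc Q hQp hQR hn2 (by omega) Su hSuSep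
  have hexSv : ∃ j, ∃ hj : j < Q.reverse.support.length, Q.reverse.support[j] ∈ Sv :=
    ThreePartsAux.exists_sep_vertex R hAc Q.reverse hrevp hrevR hn2
      (by rw [hrevlen]; omega) Sv hSvSep
  set iu := Nat.find hexSu with hiudef
  obtain ⟨hiu_lt, hiuSu⟩ := Nat.find_spec hexSu
  have hiu_min : ∀ i, i < iu → ∀ hi : i < s.length, s[i] ∉ Su := by
    intro i h3 hi hmem
    exact Nat.find_min hexSu h3 ⟨hi, hmem⟩
  obtain ⟨hiu1, hiu2⟩ := hposu iu hiu_lt hiuSu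
  set jv := Nat.find hexSv with hjvdef
  obtain ⟨hjv_lt, hjvSv⟩ := Nat.find_spec hexSv
  obtain ⟨hjv1, hjv2⟩ := hposv jv hjv_lt hjvSv
  set pv := Q.length - jv with hpvdef
  have hjvs : jv < s.length := by rw [← hrevlen]; exact hjv_lt
  have hpv_lt : pv < s.length := by omega
  have hpv99 : 99 * n ≤ pv := by omega
  have hiupv : iu < pv := by omega
  have hv'Sv : s[pv]'hpv_lt ∈ Sv := by
    have h8 := hjvSv
    rw [hrevget jv hjvs] at h8
    exact h8
  have hjv_min : ∀ p, pv < p → ∀ hp : p < s.length, s[p] ∉ Sv := by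
    intro p hgt hp hmem
    have hj : Q.length - p < jv := by omega
    refine Nat.find_min hexSv hj ⟨by rw [hrevlen]; omega, ?_⟩
    rw [hrevget (Q.length - p) (by omega)]
    have h7 : Q.length - (Q.length - p) = p := by omega
    simp only [h7]
    exact hmem
  -- the two split vertices
  set u' := s[iu]'hiu_lt with hu'def
  set v' := s[pv]'hpv_lt with hv'def
  have hidxu' : s.idxOf u' = iu := List.Nodup.idxOf_getElem hnd iu hiu_lt
  have hidxv' : s.idxOf v' = pv := List.Nodup.idxOf_getElem hnd pv hpv_lt
  have h1 : u' ∈ Q.support := List.getElem_mem hiu_lt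
  have hTlen : (Q.takeUntil u' h1).length = iu := by
    rw [(ThreePartsAux.takeUntil_support_eq Q hnd h1).1, hidxu']
  have hTsupp : (Q.takeUntil u' h1).support = s.take (iu + 1) := by
    rw [(ThreePartsAux.takeUntil_support_eq Q hnd h1).2, hidxu']
  have hD1supp : (Q.dropUntil u' h1).support = s.drop iu := by
    rw [ThreePartsAux.dropUntil_support_eq Q hnd h1, hidxu']
  have hD1p : (Q.dropUntil u' h1).IsPath := hQp.dropUntil h1
  have hD1nd : (Q.dropUntil u' h1).support.Nodup := hD1p.support_nodup
  have h2 : v' ∈ (Q.dropUntil u' h1).support := by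
    rw [hD1supp]
    have h9 : pv - iu < (s.drop iu).length := by rw [List.length_drop]; omega
    have h8 : (s.drop iu)[pv - iu]'h9 = s[pv]'hpv_lt := by
      rw [List.getElem_drop]; exact hgcongr _ _ (by omega)
    have h99 := List.getElem_mem h9
    rw [h8] at h99
    exact h99
  have hidxv'D1 : (Q.dropUntil u' h1).support.idxOf v' = pv - iu := by
    have hvd : v' ∈ s.drop iu := by rw [← hD1supp]; exact h2
    have h8 := ThreePartsAux.indexOf_drop hnd hvd
    rw [hD1supp]
    omega
  have hDtsupp : ((Q.dropUntil u' h1).takeUntil v' h2).support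
      = (s.drop iu).take (pv - iu + 1) := by
    rw [(ThreePartsAux.takeUntil_support_eq _ hD1nd h2).2, hidxv'D1, hD1supp]
  have hD2supp : ((Q.dropUntil u' h1).dropUntil v' h2).support = s.drop pv := by
    rw [ThreePartsAux.dropUntil_support_eq _ hD1nd h2, hidxv'D1, hD1supp, List.drop_drop]
    congr 1
    omega
  have hD2len : ((Q.dropUntil u' h1).dropUntil v' h2).length = jv := by
    have h8 := Walk.length_support ((Q.dropUntil u' h1).dropUntil v' h2)
    rw [hD2supp, List.length_drop] at h8
    omega
  -- index extraction
  have hT_idx : ∀ w ∈ (Q.takeUntil u' h1).support, w ∈ s ∧ s.idxOf w ≤ iu := by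
    intro w hw
    rw [hTsupp] at hw
    have hws : w ∈ s := List.take_subset _ _ hw
    have := (ThreePartsAux.mem_take_iff hws).mp hw
    exact ⟨hws, by omega⟩
  have hD2_idx : ∀ w ∈ ((Q.dropUntil u' h1).dropUntil v' h2).support,
      w ∈ s ∧ pv ≤ s.idxOf w := by
    intro w hw
    rw [hD2supp] at hw
    have hws : w ∈ s := List.drop_subset _ _ hw
    exact ⟨hws, (ThreePartsAux.mem_drop_iff hnd hws).mp hw⟩
  have hDt_idx : ∀ w ∈ ((Q.dropUntil u' h1).takeUntil v' h2).support,
      w ∈ s ∧ iu ≤ s.idxOf w ∧ s.idxOf w ≤ pv := by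
    intro w hw
    rw [hDtsupp] at hw
    have hw2 : w ∈ s.drop iu := List.take_subset _ _ hw
    have hws : w ∈ s := List.drop_subset _ _ hw2
    have h3 := (ThreePartsAux.mem_drop_iff hnd hws).mp hw2
    have h4 := (ThreePartsAux.mem_take_iff hw2).mp hw
    have h5 := ThreePartsAux.indexOf_drop hnd hw2
    exact ⟨hws, h3, by omega⟩
  refine ⟨u', v', h1, h2, hiuSu, hv'Sv, ?_, ?_, ?_, ?_, ?_, ?_, ?_, ?_, ?_, ?_⟩
  · -- (1) no internal vertex of Su ∪ Sv on P_{u,u'}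
    intro w hw hwu hwu' hmem
    obtain ⟨hws, hle⟩ := hT_idx w hw
    have hidxw : s.idxOf w < s.length := List.idxOf_lt_length_iff.mpr hws
    have hweq : s[s.idxOf w]'hidxw = w := List.getElem_idxOf hidxw
    have hlt : s.idxOf w < iu := by
      rcases Nat.lt_or_ge (s.idxOf w) iu with h|h
      · exact h
      · exfalso
        apply hwu'
        have h7 : s.idxOf w = iu := by omega
        rw [← hweq]
        simp only [h7, hu'def]
    rcases hmem with hSu|hSv
    · exact hiu_min _ hlt hidxw (by rw [hweq]; exact hSu)
    · obtain ⟨-, h9⟩ := hSvpos (s.idxOf w) hidxw (by rw [hweq]; exact hSv)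
      omega
  · rw [hTlen]; omega
  · rw [hTlen]; omega
  · -- (2) no internal vertex of Su ∪ Sv on P_{v',v}
    intro w hw hwv' hwv hmem
    obtain ⟨hws, hge⟩ := hD2_idx w hw
    have hidxw : s.idxOf w < s.length := List.idxOf_lt_length_iff.mpr hws
    have hweq : s[s.idxOf w]'hidxw = w := List.getElem_idxOf hidxw
    have hgt : pv < s.idxOf w := by
      rcases Nat.lt_or_ge pv (s.idxOf w) with h|h
      · exact h
      · exfalso
        apply hwv'
        have h7 : s.idxOf w = pv := by omega
        rw [← hweq]
        simp only [h7, hv'def]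
    rcases hmem with hSu|hSv
    · obtain ⟨-, h9⟩ := hposu (s.idxOf w) hidxw (by rw [hweq]; exact hSu)
      omega
    · exact hjv_min _ hgt hidxw (by rw [hweq]; exact hSv)
  · rw [hD2len]; omega
  · rw [hD2len]; omega
  · -- decomposition
    rw [← Walk.append_assoc, Walk.take_spec, Walk.take_spec]
  · -- T ∩ Dt = {u'}
    ext w
    simp only [Set.mem_inter_iff, Set.mem_setOf_eq, Set.mem_singleton_iff]
    constructor
    · rintro ⟨hw1, hw2'⟩
      obtain ⟨hws, hle⟩ := hT_idx w hw1
      obtain ⟨-, hge, -⟩ := hDt_idx w hw2'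
      have hidxw : s.idxOf w < s.length := List.idxOf_lt_length_iff.mpr hws
      have hweq : s[s.idxOf w]'hidxw = w := List.getElem_idxOf hidxw
      have h7 : s.idxOf w = iu := le_antisymm hle hge
      rw [← hweq]
      simp only [h7, hu'def]
    · rintro rfl
      exact ⟨Walk.end_mem_support _, Walk.start_mem_support _⟩
  · -- D2 ∩ Dt = {v'}
    ext w
    simp only [Set.mem_inter_iff, Set.mem_setOf_eq, Set.mem_singleton_iff]
    constructor
    · rintro ⟨hw1, hw2'⟩
      obtain ⟨hws, hge⟩ := hD2_idx w hw1
      obtain ⟨-, -, hle⟩ := hDt_idx w hw2'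
      have hidxw : s.idxOf w < s.length := List.idxOf_lt_length_iff.mpr hws
      have hweq : s[s.idxOf w]'hidxw = w := List.getElem_idxOf hidxw
      have h7 : s.idxOf w = pv := le_antisymm hle hge
      rw [← hweq]
      simp only [h7, hv'def]
    · rintro rfl
      exact ⟨Walk.start_mem_support _, Walk.end_mem_support _⟩
  · -- T ∩ D2 = ∅
    ext w
    simp only [Set.mem_inter_iff, Set.mem_setOf_eq, Set.mem_empty_iff_false, iff_false,
      not_and]
    intro hw1 hw2'
    obtain ⟨hws, hle⟩ := hT_idx w hw1
    obtain ⟨-, hge⟩ := hD2_idx w hw2'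
    omega
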